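/- arXiv:2604.15473 — 2 statements merged into one kernel-verified Lean document; each statement's English description precedes it below -/
import Mathlib

section
/- Let B = ℂ[x, y, y₁, y₂, …] (countably many jet variables) with the five derivations v₁, …, v₅ defined on generators by: v₁(x) = 1 and v₁ vanishes on all other variables; v₂(y) = 1 and v₂ vanishes on all other variables; v₃(y) = x, v₃(y₁) = 1, and v₃ vanishes on all other variables; v₄(x) = y, v₄(y) = 0, v₄(y_j) = ψ_j, where ψ₁ = −y₁² and ψ_{j+1} = D(ψ_j) − y₁·y_{j+1} with D the total derivative determined by D(x) = 1, D(y) = y₁, D(y_j) = y_{j+1}; v₅(x) = x, v₅(y) = −y, v₅(y_j) = −(j+1)·y_j. Let w ∈ ℚ and suppose P ∈ ℂ[y₂, y₃, …] satisfies v₄(P) = −w·y₁·P and v₅(P) = −w·P. Then the element Δ_w(P) := y₂·D(P) − (w/3)·y₃·P (which again lies in ℂ[y₂, y₃, …]) satisfies v₄(Δ_w(P)) = −(w+4)·y₁·Δ_w(P) and v₅(Δ_w(P)) = −(w+4)·Δ_w(P), while v₁, v₂, v₃ annihilate both P and Δ_w(P). That is, Δ_w is a relative invariant derivation of weight 4: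 it maps relative invariants of weight w of the prolonged special affine algebra to relative invariants of weight w + 4. -/
open MvPolynomial

/-- The polynomial ring `B = ℂ[x, y, y₁, y₂, …]`, with variable indices
`0 ↦ x`, `1 ↦ y`, `j+1 ↦ y_j` for `j ≥ 1`. -/
abbrev Binf : Type := MvPolynomial ℕ ℂ

/-- The variable `x`. -/
noncomputable def xv : Binf := X 0

/-- The variable `y`. -/
noncomputable def yv : Binf := X 1

/-- The jet variable `y_j` (for `j ≥ 1`). -/
noncomputable def yj (j : ℕ) : Binf := if 1 ≤ j then X (j + 1) else 0

/-- The operator `Δ_w(P) = y₂·D(P) − (w/3)·y₃·P`. -/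
noncomputable def Δ (D : Derivation ℂ Binf Binf) (w : ℚ) (P : Binf) : Binf :=
  yj 2 * D P - C ((w / 3 : ℚ) : ℂ) * yj 3 * P

lemma yj_eq (j : ℕ) (h : 1 ≤ j) : yj j = X (j + 1) := if_pos h

lemma comm_eq (v D : Derivation ℂ Binf Binf) (g : Binf)
    (h0 : v (D xv) - D (v xv) = g * D xv)
    (h1 : v (D yv) - D (v yv) = g * D yv)
    (hj : ∀ j, 1 ≤ j → v (D (yj j)) - D (v (yj j)) = g * D (yj j)) (Q : Binf) :
    v (D Q) - D (v Q) = g * D Q := by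
  have key : ⁅v, D⁆ = g • D := by
    apply derivation_ext
    rintro (_ | _ | n) <;>
      rw [Derivation.commutator_apply, Derivation.smul_apply, smul_eq_mul]
    · exact h0
    · exact h1
    · have := hj (n + 1) (Nat.le_add_left 1 n)
      rwa [yj_eq (n + 1) (Nat.le_add_left 1 n)] at this
  have := congrArg (fun (E : Derivation ℂ Binf Binf) => E Q) key
  simpa [Derivation.commutator_apply, Derivation.smul_apply, smul_eq_mul] using this

lemma vanish_on_adjoin (v : Derivation ℂ Binf Binf)
    (hv : ∀ j, 2 ≤ j → v (yj j) = 0) {Q : Binf}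
    (hQ : Q ∈ Algebra.adjoin ℂ (yj '' Set.Ici 2)) : v Q = 0 := by
  induction hQ using Algebra.adjoin_induction with
  | mem a ha => obtain ⟨j, hj, rfl⟩ := ha; exact hv j hj
  | algebraMap r => exact v.map_algebraMap r
  | add a b _ _ ha hb => simp [ha, hb]
  | mul a b _ _ ha hb => simp [Derivation.leibniz, ha, hb]

lemma D_mem_adjoin (D : Derivation ℂ Binf Binf)
    (hDj : ∀ j, 1 ≤ j → D (yj j) = yj (j + 1)) {Q : Binf}
    (hQ : Q ∈ Algebra.adjoin ℂ (yj '' Set.Ici 2)) :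
    D Q ∈ Algebra.adjoin ℂ (yj '' Set.Ici 2) := by
  induction hQ using Algebra.adjoin_induction with
  | mem a ha =>
      obtain ⟨j, hj, rfl⟩ := ha
      have hj' : 2 ≤ j := hj
      rw [hDj j (le_trans one_le_two hj')]
      exact Algebra.subset_adjoin ⟨j + 1, Set.mem_Ici.mpr (le_trans hj' (Nat.le_succ j)), rfl⟩
  | algebraMap r => rw [D.map_algebraMap]; exact Subalgebra.zero_mem _
  | add a b _ _ ha hb => rw [map_add]; exact Subalgebra.add_mem _ ha hb
  | mul a b hma hmb ha hb =>
      rw [Derivation.leibniz, smul_eq_mul, smul_eq_mul]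
      exact Subalgebra.add_mem _ (Subalgebra.mul_mem _ hma hb) (Subalgebra.mul_mem _ hmb ha)

/-- Let `v₁, …, v₅` be the prolongations of the special affine algebra
`⟨∂x, ∂y, x∂y, y∂x, x∂x − y∂y⟩` on `B = ℂ[x, y, y₁, y₂, …]` described on generators as in
the hypotheses, with `D` the total derivative and `ψ₁ = −y₁²`,
`ψ_{j+1} = D(ψ_j) − y₁·y_{j+1}`.  Let `w ∈ ℚ` and let `P ∈ ℂ[y₂, y₃, …]` satisfy
`v₄(P) = −w·y₁·P` and `v₅(P) = −w·P`.  Then `Δ_w(P) = y₂·D(P) − (w/3)·y₃·P` again lies in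
`ℂ[y₂, y₃, …]` and satisfies `v₄(Δ_w(P)) = −(w+4)·y₁·Δ_w(P)`,
`v₅(Δ_w(P)) = −(w+4)·Δ_w(P)`, while `v₁, v₂, v₃` annihilate both `P` and `Δ_w(P)`:
`Δ_w` is a relative invariant derivation of weight `4`. -/
theorem Delta_is_relative_invariant_derivation_of_weight_four
    (D v1 v2 v3 v4 v5 : Derivation ℂ Binf Binf) (ψ : ℕ → Binf)
    (hDx : D xv = 1) (hDy : D yv = yj 1)
    (hDj : ∀ j, 1 ≤ j → D (yj j) = yj (j + 1))
    (hψ1 : ψ 1 = -(yj 1) ^ 2)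
    (hψrec : ∀ j, 1 ≤ j → ψ (j + 1) = D (ψ j) - yj 1 * yj (j + 1))
    (hv1x : v1 xv = 1) (hv1y : v1 yv = 0)
    (hv1j : ∀ j, 1 ≤ j → v1 (yj j) = 0)
    (hv2x : v2 xv = 0) (hv2y : v2 yv = 1)
    (hv2j : ∀ j, 1 ≤ j → v2 (yj j) = 0)
    (hv3x : v3 xv = 0) (hv3y : v3 yv = xv)
    (hv31 : v3 (yj 1) = 1)
    (hv3j : ∀ j, 2 ≤ j → v3 (yj j) = 0)
    (hv4x : v4 xv = yv) (hv4y : v4 yv = 0)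
    (hv4j : ∀ j, 1 ≤ j → v4 (yj j) = ψ j)
    (hv5x : v5 xv = xv) (hv5y : v5 yv = -yv)
    (hv5j : ∀ j, 1 ≤ j → v5 (yj j) = -(C ((j : ℂ) + 1) * yj j))
    (w : ℚ) (P : Binf)
    (hPmem : P ∈ Algebra.adjoin ℂ (yj '' Set.Ici 2))
    (hP4 : v4 P = -(C ((w : ℂ)) * yj 1 * P))
    (hP5 : v5 P = -(C ((w : ℂ)) * P)) :
    Δ D w P ∈ Algebra.adjoin ℂ (yj '' Set.Ici 2) ∧
    v4 (Δ D w P) = -(C (((w + 4 : ℚ) : ℂ)) * yj 1 * Δ D w P) ∧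
    v5 (Δ D w P) = -(C (((w + 4 : ℚ) : ℂ)) * Δ D w P) ∧
    v1 P = 0 ∧ v2 P = 0 ∧ v3 P = 0 ∧
    v1 (Δ D w P) = 0 ∧ v2 (Δ D w P) = 0 ∧ v3 (Δ D w P) = 0 := by
  -- ψ₂ and ψ₃
  have hψ2 : ψ 2 = -(3 * yj 1 * yj 2) := by
    have h : ψ 2 = D (ψ 1) - yj 1 * yj 2 := hψrec 1 le_rfl
    rw [hψ1, sq, map_neg, Derivation.leibniz] at h
    try simp only [smul_eq_mul] at h
    rw [hDj 1 le_rfl] at h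
    rw [h]; ring
  have hD3 : D (3 : Binf) = 0 := by
    rw [show (3 : Binf) = C (3 : ℂ) from (map_ofNat (C : ℂ →+* Binf) 3).symm]
    exact derivation_C D 3
  have hψ3 : ψ 3 = -(3 * yj 2 ^ 2 + 4 * yj 1 * yj 3) := by
    have h : ψ 3 = D (ψ 2) - yj 1 * yj 3 := hψrec 2 one_le_two
    rw [hψ2, map_neg, Derivation.leibniz] at h
    simp only [smul_eq_mul, Derivation.leibniz, hD3] at h
    rw [hDj 1 le_rfl, hDj 2 one_le_two] at h
    rw [h]; ring
  -- commutator relations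
  have hc4 : ∀ Q, v4 (D Q) - D (v4 Q) = -(yj 1) * D Q := by
    apply comm_eq
    · rw [hDx, hv4x, hDy, Derivation.map_one_eq_zero]; ring
    · rw [hDy, hv4y, hv4j 1 le_rfl, hψ1, map_zero]; ring
    · intro j hj
      rw [hDj j hj, hv4j (j + 1) (Nat.le_succ_of_le hj), hv4j j hj, hψrec j hj]
      ring
  have hc5 : ∀ Q, v5 (D Q) - D (v5 Q) = -1 * D Q := by
    apply comm_eq
    · rw [hDx, hv5x, hDx, Derivation.map_one_eq_zero]; ring
    · rw [hDy, hv5y, hv5j 1 le_rfl, map_neg, hDy]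
      rw [show ((1 : ℕ) : ℂ) + 1 = (2 : ℂ) by norm_num, map_ofNat]
      ring
    · intro j hj
      rw [hDj j hj, hv5j (j + 1) (Nat.le_succ_of_le hj), hv5j j hj, map_neg,
        Derivation.leibniz]
      simp only [smul_eq_mul, derivation_C]
      rw [hDj j hj]
      simp only [Nat.cast_add, Nat.cast_one, map_add, map_one, map_natCast]
      ring
  have hc1 : ∀ Q, v1 (D Q) - D (v1 Q) = 0 * D Q := by
    apply comm_eq
    · rw [hDx, hv1x, Derivation.map_one_eq_zero, Derivation.map_one_eq_zero]; ring
    · rw [hDy, hv1y, hv1j 1 le_rfl, map_zero]; ring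
    · intro j hj
      rw [hDj j hj, hv1j (j + 1) (Nat.le_succ_of_le hj), hv1j j hj, map_zero]; ring
  have hc2 : ∀ Q, v2 (D Q) - D (v2 Q) = 0 * D Q := by
    apply comm_eq
    · rw [hDx, hv2x, Derivation.map_one_eq_zero, map_zero]; ring
    · rw [hDy, hv2y, hv2j 1 le_rfl, Derivation.map_one_eq_zero]; ring
    · intro j hj
      rw [hDj j hj, hv2j (j + 1) (Nat.le_succ_of_le hj), hv2j j hj, map_zero]; ring
  have hc3 : ∀ Q, v3 (D Q) - D (v3 Q) = 0 * D Q := by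
    apply comm_eq
    · rw [hDx, hv3x, Derivation.map_one_eq_zero, map_zero]; ring
    · rw [hDy, hv31, hv3y, hDx]; ring
    · intro j hj
      rcases Nat.lt_or_ge j 2 with h2 | h2
      · have hj1 : j = 1 := by omega
        subst hj1
        rw [hDj 1 le_rfl, hv3j 2 le_rfl, hv31, Derivation.map_one_eq_zero]; ring
      · rw [hDj j hj, hv3j (j + 1) (Nat.le_succ_of_le h2), hv3j j h2, map_zero]; ring
  -- annihilation of P
  have hP1 : v1 P = 0 := vanish_on_adjoin v1 (fun j hj => hv1j j (le_trans one_le_two hj)) hPmem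
  have hP2 : v2 P = 0 := vanish_on_adjoin v2 (fun j hj => hv2j j (le_trans one_le_two hj)) hPmem
  have hP3 : v3 P = 0 := vanish_on_adjoin v3 hv3j hPmem
  -- membership of Δ
  have h2mem : yj 2 ∈ Algebra.adjoin ℂ (yj '' Set.Ici 2) :=
    Algebra.subset_adjoin ⟨2, Set.mem_Ici.mpr le_rfl, rfl⟩
  have h3mem : yj 3 ∈ Algebra.adjoin ℂ (yj '' Set.Ici 2) :=
    Algebra.subset_adjoin ⟨3, Set.mem_Ici.mpr (by norm_num), rfl⟩
  have hCmem : ∀ a : ℂ, (C a : Binf) ∈ Algebra.adjoin ℂ (yj '' Set.Ici 2) := by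
    intro a
    rw [← MvPolynomial.algebraMap_eq]
    exact Subalgebra.algebraMap_mem _ a
  have hDPmem : D P ∈ Algebra.adjoin ℂ (yj '' Set.Ici 2) := D_mem_adjoin D hDj hPmem
  have hΔmem : Δ D w P ∈ Algebra.adjoin ℂ (yj '' Set.Ici 2) :=
    Subalgebra.sub_mem _ (Subalgebra.mul_mem _ h2mem hDPmem)
      (Subalgebra.mul_mem _ (Subalgebra.mul_mem _ (hCmem _) h3mem) hPmem)
  -- scalar identities
  have h3c : (3 : Binf) * C ((w / 3 : ℚ) : ℂ) = C ((w : ℂ)) := by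
    rw [show ((w : ℂ)) = 3 * ((w / 3 : ℚ) : ℂ) by push_cast; ring, map_mul, map_ofNat]
  have h4c : (C (((w + 4 : ℚ) : ℂ)) : Binf) = C ((w : ℂ)) + 4 := by
    rw [show (((w + 4 : ℚ)) : ℂ) = (w : ℂ) + 4 by push_cast; ring, map_add, map_ofNat]
  -- derivatives of D P
  have hDv4P : D (v4 P) = -(C ((w : ℂ)) * (yj 2 * P + yj 1 * D P)) := by
    rw [hP4, map_neg, mul_assoc, Derivation.leibniz, Derivation.leibniz]
    simp only [smul_eq_mul, derivation_C, hDj 1 le_rfl]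
    ring
  have hDv5P : D (v5 P) = -(C ((w : ℂ)) * D P) := by
    rw [hP5, map_neg, Derivation.leibniz]
    simp only [smul_eq_mul, derivation_C]
    ring
  have hv4DP : v4 (D P) = -(C ((w : ℂ)) * (yj 2 * P + yj 1 * D P)) - yj 1 * D P := by
    linear_combination (hc4 P) + hDv4P
  have hv5DP : v5 (D P) = -(C ((w : ℂ)) * D P) - D P := by
    linear_combination (hc5 P) + hDv5P
  -- main computations
  have hΔ4 : v4 (Δ D w P) = -(C (((w + 4 : ℚ) : ℂ)) * yj 1 * Δ D w P) := by
    show v4 (yj 2 * D P - C ((w / 3 : ℚ) : ℂ) * yj 3 * P)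
        = -(C (((w + 4 : ℚ) : ℂ)) * yj 1 * (yj 2 * D P - C ((w / 3 : ℚ) : ℂ) * yj 3 * P))
    rw [map_sub, Derivation.leibniz, mul_assoc, Derivation.leibniz, Derivation.leibniz]
    simp only [smul_eq_mul, derivation_C, hv4j 2 one_le_two, hv4j 3 (by norm_num), hψ2,
      hψ3, hP4, hv4DP, h4c]
    linear_combination (yj 2 ^ 2 * P) * h3c
  have hΔ5 : v5 (Δ D w P) = -(C (((w + 4 : ℚ) : ℂ)) * Δ D w P) := by
    show v5 (yj 2 * D P - C ((w / 3 : ℚ) : ℂ) * yj 3 * P)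
        = -(C (((w + 4 : ℚ) : ℂ)) * (yj 2 * D P - C ((w / 3 : ℚ) : ℂ) * yj 3 * P))
    rw [map_sub, Derivation.leibniz, mul_assoc, Derivation.leibniz, Derivation.leibniz]
    have h52 : v5 (yj 2) = -(3 * yj 2) := by
      rw [hv5j 2 one_le_two, show ((2 : ℕ) : ℂ) + 1 = (3 : ℂ) by norm_num, map_ofNat]
    have h53 : v5 (yj 3) = -(4 * yj 3) := by
      rw [hv5j 3 (by norm_num), show ((3 : ℕ) : ℂ) + 1 = (4 : ℂ) by norm_num, map_ofNat]
    simp only [smul_eq_mul, derivation_C, h52, h53, hP5, hv5DP, h4c]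
    ring
  -- annihilation of Δ
  have hΔ1 : v1 (Δ D w P) = 0 :=
    vanish_on_adjoin v1 (fun j hj => hv1j j (le_trans one_le_two hj)) hΔmem
  have hΔ2 : v2 (Δ D w P) = 0 :=
    vanish_on_adjoin v2 (fun j hj => hv2j j (le_trans one_le_two hj)) hΔmem
  have hΔ3 : v3 (Δ D w P) = 0 := vanish_on_adjoin v3 hv3j hΔmem
  exact ⟨hΔmem, hΔ4, hΔ5, hP1, hP2, hP3, hΔ1, hΔ2, hΔ3⟩
end

section
/- Let ξ be the ℂ-derivation of ℂ[x₁, y₁, x₂, y₂] defined by ξ(x₁) = y₁, ξ(y₁) = −x₁, ξ(x₂) = y₂, ξ(y₂) = −x₂ (the infinitesimal generator of the diagonal SO(2, ℂ)-action on ordered pairs of vectors in ℂ²), extended uniquely (by the quotient rule) to a derivation ξ̂ of the rational function field ℂ(x₁, y₁, x₂, y₂). Then a rational function f ∈ ℂ(x₁, y₁, x₂, y₂) satisfies ξ̂(f) = 0 if and only if f lies in the subfield generated over ℂ by the three joint invariants x₁² + y₁², x₁x₂ + y₁y₂, and x₁y₂ − y₁x₂. In particular, x₂² + y₂² lies in this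 subfield, via the relation (x₁² + y₁²)(x₂² + y₂²) = (x₁x₂ + y₁y₂)² + (x₁y₂ − y₁x₂)². -/
open MvPolynomial

/-- The polynomial ring `ℂ[x₁, y₁, x₂, y₂]`, with variable indices
`0 ↦ x₁`, `1 ↦ y₁`, `2 ↦ x₂`, `3 ↦ y₂`. -/
abbrev A4 : Type := MvPolynomial (Fin 4) ℂ

/-- The rational function field `ℂ(x₁, y₁, x₂, y₂)`. -/
abbrev K4 : Type := FractionRing A4

/-- The embedding `ℂ[x₁, y₁, x₂, y₂] → ℂ(x₁, y₁, x₂, y₂)`. -/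
noncomputable def ι : A4 →+* K4 := algebraMap A4 K4

/-- `‖v₁‖² = x₁² + y₁²`. -/
noncomputable def J1 : A4 := X 0 ^ 2 + X 1 ^ 2
/-- `v₁·v₂ = x₁x₂ + y₁y₂`. -/
noncomputable def J2 : A4 := X 0 * X 2 + X 1 * X 3
/-- `ω(v₁,v₂) = x₁y₂ − y₁x₂`. -/
noncomputable def J3 : A4 := X 0 * X 3 - X 1 * X 2
/-- `‖v₂‖² = x₂² + y₂²`. -/
noncomputable def J4 : A4 := X 2 ^ 2 + X 3 ^ 2

lemma ratio_const {F : Type*} [Field F] [CharZero F] {P Q : Polynomial F} (hQ : Q ≠ 0)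
    (h : Polynomial.derivative P * Q = P * Polynomial.derivative Q) : ∃ c : F, P = Polynomial.C c * Q := by
  classical
  letI : GCDMonoid (Polynomial F) := EuclideanDomain.gcdMonoid (Polynomial F)
  have hg0 : GCDMonoid.gcd P Q ≠ 0 := gcd_ne_zero_of_right hQ
  obtain ⟨p, hp⟩ : GCDMonoid.gcd P Q ∣ P := gcd_dvd_left P Q
  obtain ⟨q, hq⟩ : GCDMonoid.gcd P Q ∣ Q := gcd_dvd_right P Q
  set g := GCDMonoid.gcd P Q with hg
  have hq0 : q ≠ 0 := by rintro rfl; simp at hq; exact hQ hq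
  have hcop : IsCoprime p q := by
    have h1 := isCoprime_div_gcd_div_gcd (p := P) (q := Q) hQ
    rwa [← hg, hp, hq, mul_div_cancel_left₀ _ hg0, mul_div_cancel_left₀ _ hg0] at h1
  have key : p * Polynomial.derivative q = Polynomial.derivative p * q := by
    have h2 : Polynomial.derivative (g * p) * (g * q) = (g * p) * Polynomial.derivative (g * q) := by
      rw [← hp, ← hq]; exact h
    rw [Polynomial.derivative_mul, Polynomial.derivative_mul] at h2
    have h3 : g * g * (Polynomial.derivative p * q) = g * g * (p * Polynomial.derivative q) := by
      ring_nf; ring_nf at h2; linear_combination h2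
    exact (mul_left_cancel₀ (mul_ne_zero hg0 hg0) h3).symm
  have hw : Polynomial.wronskian p q = 0 := by rw [Polynomial.wronskian, key, sub_self]
  obtain ⟨hdp, hdq⟩ := hcop.wronskian_eq_zero_iff.mp hw
  obtain ⟨a, ha⟩ : ∃ a, p = Polynomial.C a :=
    ⟨p.coeff 0, Polynomial.eq_C_of_natDegree_eq_zero (Polynomial.natDegree_eq_zero_of_derivative_eq_zero hdp)⟩
  obtain ⟨b, hb⟩ : ∃ b, q = Polynomial.C b :=
    ⟨q.coeff 0, Polynomial.eq_C_of_natDegree_eq_zero (Polynomial.natDegree_eq_zero_of_derivative_eq_zero hdq)⟩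
  have hb0 : b ≠ 0 := by rintro rfl; simp at hb; exact hq0 hb
  refine ⟨a / b, ?_⟩
  rw [hp, hq, ha, hb, div_eq_mul_inv, map_mul]
  have hbb : Polynomial.C b⁻¹ * (g * Polynomial.C b) = g := by
    rw [mul_comm g, ← mul_assoc, ← map_mul, inv_mul_cancel₀ hb0, map_one, one_mul]
  rw [mul_assoc (Polynomial.C a), hbb, mul_comm]

set_option maxHeartbeats 1600000 in
set_option synthInstance.maxHeartbeats 200000 in
/-- Let `ξ` be the ℂ-derivation of `ℂ[x₁, y₁, x₂, y₂]` with
`ξ(x₁) = y₁`, `ξ(y₁) = −x₁`, `ξ(x₂) = y₂`, `ξ(y₂) = −x₂` (the diagonal `SO(2,ℂ)`-action),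
extended uniquely (by the quotient rule) to a derivation `ξ̂` of `ℂ(x₁, y₁, x₂, y₂)`.
Then `ξ̂(f) = 0` if and only if `f` lies in the subfield generated over `ℂ` by
`x₁² + y₁²`, `x₁x₂ + y₁y₂` and `x₁y₂ − y₁x₂`.  In particular `x₂² + y₂²` lies in this
subfield, via `(x₁² + y₁²)(x₂² + y₂²) = (x₁x₂ + y₁y₂)² + (x₁y₂ − y₁x₂)²`. -/
theorem so2_joint_rational_invariants
    (ξ : Derivation ℂ A4 A4)
    (hx1 : ξ (X 0) = X 1) (hy1 : ξ (X 1) = -(X 0))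
    (hx2 : ξ (X 2) = X 3) (hy2 : ξ (X 3) = -(X 2))
    (ξ' : K4 → K4)
    (hadd : ∀ f g : K4, ξ' (f + g) = ξ' f + ξ' g)
    (hmul : ∀ f g : K4, ξ' (f * g) = ξ' f * g + f * ξ' g)
    (hext : ∀ p : A4, ξ' (ι p) = ι (ξ p)) :
    (∀ f : K4,
      ξ' f = 0 ↔
      f ∈ Subfield.closure
        ((Set.range fun c : ℂ => ι (C c)) ∪ {ι J1, ι J2, ι J3})) ∧
    J1 * J4 = J2 ^ 2 + J3 ^ 2 ∧
    ι J4 ∈ Subfield.closure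
      ((Set.range fun c : ℂ => ι (C c)) ∪ {ι J1, ι J2, ι J3}) := by
  classical
  set G : Set K4 := (Set.range fun c : ℂ => ι (C c)) ∪ {ι J1, ι J2, ι J3} with hG
  set F : Subfield K4 := Subfield.closure G with hF
  -- basic facts about ξ'
  have h0 : ξ' 0 = 0 := by
    have h := hadd 0 0; rw [add_zero] at h; exact (left_eq_add.mp h)
  have h1 : ξ' 1 = 0 := by
    have h := hmul 1 1; simp only [mul_one, one_mul] at h
    exact (left_eq_add.mp h)
  -- the subfield of invariants
  let S : Subfield K4 :=
    { carrier := {f : K4 | ξ' f = 0}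
      zero_mem' := h0
      one_mem' := h1
      add_mem' := by
        intro a b ha hb
        show ξ' (a + b) = 0
        rw [hadd, ha, hb, add_zero]
      mul_mem' := by
        intro a b ha hb
        show ξ' (a * b) = 0
        rw [hmul, ha, hb, zero_mul, mul_zero, add_zero]
      neg_mem' := by
        intro a ha
        show ξ' (-a) = 0
        have h := hadd a (-a); rw [add_neg_cancel, h0, ha, zero_add] at h
        exact h.symm
      inv_mem' := by
        intro a ha
        rcases eq_or_ne a 0 with rfl | ha0
        · show ξ' (0 : K4)⁻¹ = 0; rw [inv_zero]; exact h0
        · show ξ' a⁻¹ = 0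
          have h := hmul a a⁻¹
          rw [mul_inv_cancel₀ ha0, h1, ha, zero_mul, zero_add] at h
          exact (mul_eq_zero.mp h.symm).resolve_left ha0 }
  have hCder : ∀ c : ℂ, ξ (C c) = 0 := by
    intro c
    have : (C c : A4) = algebraMap ℂ A4 c := rfl
    rw [this, Derivation.map_algebraMap]
  have hξJ1 : ξ J1 = 0 := by
    rw [J1, map_add, Derivation.leibniz_pow, Derivation.leibniz_pow, hx1, hy1]
    simp [smul_eq_mul]; ring
  have hξJ2 : ξ J2 = 0 := by
    rw [J2, map_add, Derivation.leibniz, Derivation.leibniz, hx1, hy1, hx2, hy2]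
    simp [smul_eq_mul]; ring
  have hξJ3 : ξ J3 = 0 := by
    rw [J3, map_sub, Derivation.leibniz, Derivation.leibniz, hx1, hy1, hx2, hy2]
    simp [smul_eq_mul]; ring
  have hGS : G ⊆ (S : Set K4) := by
    rintro x (⟨c, rfl⟩ | hx)
    · show ξ' (ι (C c)) = 0; rw [hext, hCder, map_zero]
    · simp only [Set.mem_insert_iff, Set.mem_singleton_iff] at hx
      rcases hx with rfl | rfl | rfl
      · show ξ' (ι J1) = 0; rw [hext, hξJ1, map_zero]
      · show ξ' (ι J2) = 0; rw [hext, hξJ2, map_zero]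
      · show ξ' (ι J3) = 0; rw [hext, hξJ3, map_zero]
  have hFS : ∀ x ∈ F, ξ' x = 0 := fun x hx => Subfield.closure_le.mpr hGS hx
  -- nonvanishing tool
  have ιinj : Function.Injective ι := IsFractionRing.injective A4 K4
  have hne : ∀ (p : A4) (v : Fin 4 → ℂ), eval v p ≠ 0 → ι p ≠ 0 := by
    intro p v hv h
    apply hv
    have hp : p = 0 := ιinj (by rw [h, map_zero])
    rw [hp, map_zero]
  -- membership of generators
  have hconst : ∀ c : ℂ, ι (C c) ∈ F := fun c =>
    Subfield.subset_closure (Or.inl ⟨c, rfl⟩)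
  have hJ1F : ι J1 ∈ F := Subfield.subset_closure (Or.inr (by simp))
  have hJ2F : ι J2 ∈ F := Subfield.subset_closure (Or.inr (by simp))
  have hJ3F : ι J3 ∈ F := Subfield.subset_closure (Or.inr (by simp))
  -- the polynomial identity
  have hrel : J1 * J4 = J2 ^ 2 + J3 ^ 2 := by
    simp only [J1, J2, J3, J4]; ring
  have hJ1ne : ι J1 ≠ 0 := by
    apply hne J1 ![1, 0, 0, 0]
    simp [J1]
  have hJ4F : ι J4 ∈ F := by
    have h4 : ι J4 = (ι J2 ^ 2 + ι J3 ^ 2) / ι J1 := by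
      rw [eq_div_iff hJ1ne, ← map_pow, ← map_pow, ← map_add, ← map_mul]
      exact congrArg ι (by rw [mul_comm]; exact hrel)
    rw [h4]
    exact F.div_mem (F.add_mem (F.pow_mem hJ2F 2) (F.pow_mem hJ3F 2)) hJ1F
  refine ⟨?_, hrel, hJ4F⟩
  -- main equivalence
  -- setup: complex structure
  set I4 : K4 := ι (C Complex.I) with hI4def
  have hI4sq : I4 * I4 = -1 := by
    rw [hI4def, ← map_mul, ← map_mul, Complex.I_mul_I, map_neg, map_one, map_neg, map_one]
  have hI4ne : I4 ≠ 0 := hne _ ![0, 0, 0, 0] (by simp [Complex.I_ne_zero])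
  set x1 : K4 := ι (X 0) with hx1def
  set y1 : K4 := ι (X 1) with hy1def
  set x2 : K4 := ι (X 2) with hx2def
  set y2 : K4 := ι (X 3) with hy2def
  have hI4F : I4 ∈ F := hconst _
  have hI4inv : ξ' I4 = 0 := hFS _ hI4F
  have hdx1 : ξ' x1 = y1 := by rw [hx1def, hext, hx1, hy1def]
  have hdy1 : ξ' y1 = -x1 := by rw [hy1def, hext, hy1, map_neg, hx1def]
  have hdx2 : ξ' x2 = y2 := by rw [hx2def, hext, hx2, hy2def]
  have hdy2 : ξ' y2 = -x2 := by rw [hy2def, hext, hy2, map_neg, hx2def]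
  have hmulI : ∀ f : K4, ξ' (I4 * f) = I4 * ξ' f := by
    intro f; rw [hmul, hI4inv, zero_mul, zero_add]
  set z1 : K4 := x1 + I4 * y1 with hz1def
  set c1 : K4 := x1 - I4 * y1 with hc1def
  set z2 : K4 := x2 + I4 * y2 with hz2def
  set c2 : K4 := x2 - I4 * y2 with hc2def
  have hz1ne : z1 ≠ 0 := by
    have : z1 = ι (X 0 + C Complex.I * X 1) := by
      rw [hz1def, map_add, map_mul, hx1def, hy1def, hI4def]
    rw [this]
    exact hne _ ![1, 0, 0, 0] (by simp)
  have hc1ne : c1 ≠ 0 := by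
    have : c1 = ι (X 0 - C Complex.I * X 1) := by
      rw [hc1def, map_sub, map_mul, hx1def, hy1def, hI4def]
    rw [this]
    exact hne _ ![1, 0, 0, 0] (by simp)
  have hdz1 : ξ' z1 = -(I4 * z1) := by
    rw [hz1def, hadd, hmulI, hdx1, hdy1]
    linear_combination y1 * hI4sq
  -- derivation over F
  let Dlin : K4 →ₗ[F] K4 :=
    { toFun := ξ'
      map_add' := hadd
      map_smul' := by
        intro c x
        have hc : ξ' (c : K4) = 0 := hFS _ c.2
        have h := hmul (c : K4) x
        rw [hc, zero_mul, zero_add] at h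
        exact h
      }
  let D : Derivation F K4 K4 :=
    { toLinearMap := Dlin
      map_one_eq_zero' := h1
      leibniz' := by
        intro a b
        show ξ' (a * b) = a • ξ' b + b • ξ' a
        simp only [smul_eq_mul]
        rw [hmul]; ring }
  have hD : ∀ x : K4, D x = ξ' x := fun _ => rfl
  -- transcendence of z1 over F
  have htr : Transcendental F z1 := by
    intro halg
    have hint : IsIntegral F z1 := halg.isIntegral
    have hp0 : minpoly F z1 ≠ 0 := minpoly.ne_zero hint
    have hpz : Polynomial.aeval z1 (minpoly F z1) = 0 := minpoly.aeval _ _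
    have hDa := D.map_aeval (minpoly F z1) z1
    rw [hpz, map_zero, hD, hdz1, smul_eq_mul] at hDa
    have hprod : -(I4 * z1) ≠ 0 := by
      intro h; exact hz1ne (by
        rcases mul_eq_zero.mp (neg_eq_zero.mp h) with h' | h'
        · exact absurd h' hI4ne
        · exact h')
    have hD' : Polynomial.aeval z1 (Polynomial.derivative (minpoly F z1)) = 0 :=
      (mul_eq_zero.mp hDa.symm).resolve_right hprod
    have hd0 : Polynomial.derivative (minpoly F z1) ≠ 0 := by
      intro h
      have h2 := Polynomial.natDegree_eq_zero_of_derivative_eq_zero h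
      have h3 := minpoly.natDegree_pos hint
      omega
    exact absurd (minpoly.degree_le_of_ne_zero F z1 hd0 hD')
      (not_le.mpr (Polynomial.degree_derivative_lt hp0))
  -- the intermediate field F(z1)
  set E := IntermediateField.adjoin F ({z1} : Set K4) with hE
  have hmemF : ∀ x : K4, x ∈ F → x ∈ E := fun x hx =>
    E.algebraMap_mem (⟨x, hx⟩ : F)
  have hz1E : z1 ∈ E := IntermediateField.mem_adjoin_simple_self F z1
  have hI4E : I4 ∈ E := hmemF _ hI4F
  have h2E : (2 : K4) ∈ E := by
    have := E.one_mem
    have h := E.add_mem this this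
    norm_num at h ⊢
  have h2ne : (2 : K4) ≠ 0 := two_ne_zero
  -- recover coordinates
  have hprod1 : z1 * c1 = ι J1 := by
    rw [hz1def, hc1def, J1, map_add, map_pow, map_pow, ← hx1def, ← hy1def]
    linear_combination (-(y1 * y1)) * hI4sq
  have hc1E : c1 ∈ E := by
    have hc1eq : c1 = ι J1 / z1 := by
      rw [eq_div_iff hz1ne, mul_comm]; exact hprod1
    rw [hc1eq]
    exact E.div_mem (hmemF _ hJ1F) hz1E
  have hx1E : x1 ∈ E := by
    have : x1 = (z1 + c1) / 2 := by rw [hz1def, hc1def]; ring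
    rw [this]; exact E.div_mem (E.add_mem hz1E hc1E) h2E
  have hy1E : y1 ∈ E := by
    have hI4z : (2 : K4) * I4 ≠ 0 := mul_ne_zero h2ne hI4ne
    have : y1 = (z1 - c1) / (2 * I4) := by
      rw [eq_div_iff hI4z, hz1def, hc1def]; ring
    rw [this]; exact E.div_mem (E.sub_mem hz1E hc1E) (E.mul_mem h2E hI4E)
  have hprod2 : z1 * c2 = ι J2 - I4 * ι J3 := by
    rw [hz1def, hc2def, J2, J3, map_add, map_sub, map_mul, map_mul, map_mul, map_mul,
      ← hx1def, ← hy1def, ← hx2def, ← hy2def]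
    linear_combination (-(y1 * y2)) * hI4sq
  have hc2E : c2 ∈ E := by
    have : c2 = (ι J2 - I4 * ι J3) / z1 := by
      rw [eq_div_iff hz1ne, mul_comm]; exact hprod2
    rw [this]
    exact E.div_mem (E.sub_mem (hmemF _ hJ2F) (E.mul_mem hI4E (hmemF _ hJ3F))) hz1E
  have hprod3 : c1 * z2 = ι J2 + I4 * ι J3 := by
    rw [hc1def, hz2def, J2, J3, map_add, map_sub, map_mul, map_mul, map_mul, map_mul,
      ← hx1def, ← hy1def, ← hx2def, ← hy2def]
    linear_combination (-(y1 * y2)) * hI4sq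
  have hz2E : z2 ∈ E := by
    have : z2 = (ι J2 + I4 * ι J3) / c1 := by
      rw [eq_div_iff hc1ne, mul_comm]; exact hprod3
    rw [this]
    exact E.div_mem (E.add_mem (hmemF _ hJ2F) (E.mul_mem hI4E (hmemF _ hJ3F))) hc1E
  have hx2E : x2 ∈ E := by
    have : x2 = (z2 + c2) / 2 := by rw [hz2def, hc2def]; ring
    rw [this]; exact E.div_mem (E.add_mem hz2E hc2E) h2E
  have hy2E : y2 ∈ E := by
    have hI4z : (2 : K4) * I4 ≠ 0 := mul_ne_zero h2ne hI4ne
    have : y2 = (z2 - c2) / (2 * I4) := by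
      rw [eq_div_iff hI4z, hz2def, hc2def]; ring
    rw [this]; exact E.div_mem (E.sub_mem hz2E hc2E) (E.mul_mem h2E hI4E)
  -- every element of K4 lies in E
  have hAE : ∀ p : A4, ι p ∈ E := by
    intro p
    induction p using MvPolynomial.induction_on with
    | C c => exact hmemF _ (hconst c)
    | add p q hp hq => rw [map_add]; exact E.add_mem hp hq
    | mul_X p n hp =>
      rw [map_mul]
      refine E.mul_mem hp ?_
      fin_cases n
      · exact hx1E
      · exact hy1E
      · exact hx2E
      · exact hy2E
  have hallE : ∀ f : K4, f ∈ E := by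
    intro f
    obtain ⟨p, q, hq, hf⟩ := IsFractionRing.div_surjective (A := A4) f
    rw [← hf]
    exact E.div_mem (hAE p) (hAE q)
  -- main forward direction
  intro f
  constructor
  · intro hf
    have hfE := hallE f
    rw [hE, IntermediateField.mem_adjoin_simple_iff] at hfE
    obtain ⟨P, Q, hfPQ⟩ := hfE
    by_cases hQ : Q = 0
    · rw [hQ, map_zero, div_zero] at hfPQ
      rw [hfPQ]; exact F.zero_mem
    have haQ : Polynomial.aeval z1 Q ≠ 0 := fun h => htr ⟨Q, hQ, h⟩
    have hfQ : f * Polynomial.aeval z1 Q = Polynomial.aeval z1 P := by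
      rw [hfPQ, div_mul_cancel₀ _ haQ]
    have hdaQ : ξ' (Polynomial.aeval z1 Q) =
        Polynomial.aeval z1 (Polynomial.derivative Q) * -(I4 * z1) := by
      have := D.map_aeval Q z1
      rw [hD, hD, hdz1, smul_eq_mul] at this
      exact this
    have hdaP : ξ' (Polynomial.aeval z1 P) =
        Polynomial.aeval z1 (Polynomial.derivative P) * -(I4 * z1) := by
      have := D.map_aeval P z1
      rw [hD, hD, hdz1, smul_eq_mul] at this
      exact this
    have hprodne : -(I4 * z1) ≠ 0 := by
      intro h
      rcases mul_eq_zero.mp (neg_eq_zero.mp h) with h' | h'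
      · exact hI4ne h'
      · exact hz1ne h'
    have step : f * (Polynomial.aeval z1 (Polynomial.derivative Q) * -(I4 * z1)) =
        Polynomial.aeval z1 (Polynomial.derivative P) * -(I4 * z1) := by
      have h := hmul f (Polynomial.aeval z1 Q)
      rw [hf, zero_mul, zero_add, hfQ, hdaP, hdaQ] at h
      exact h.symm
    have cancel : f * Polynomial.aeval z1 (Polynomial.derivative Q) =
        Polynomial.aeval z1 (Polynomial.derivative P) := by
      apply mul_right_cancel₀ hprodne
      rw [← mul_assoc] at step
      exact step
    have hpoly : Polynomial.derivative P * Q = P * Polynomial.derivative Q := by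
      by_contra hne0
      apply htr
      refine ⟨Polynomial.derivative P * Q - P * Polynomial.derivative Q, sub_ne_zero.mpr hne0, ?_⟩
      rw [map_sub, map_mul, map_mul]
      linear_combination (Polynomial.aeval z1 (Polynomial.derivative Q)) * hfQ -
        (Polynomial.aeval z1 Q) * cancel
    obtain ⟨c, hc⟩ := ratio_const hQ hpoly
    have hfc : f = (c : K4) := by
      have haP : Polynomial.aeval z1 P = (c : K4) * Polynomial.aeval z1 Q := by
        rw [hc, map_mul, Polynomial.aeval_C]
        rfl
      rw [hfPQ, haP, mul_div_assoc, div_self haQ, mul_one]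
    rw [hfc]; exact c.2
  · intro hf; exact hFS f hf
end
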